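/- Color the edges of the complete graph K_n with colors 1,…,t, giving spanning subgraphs H_1,…,H_t (H_j consists of the edges colored j), such that H_j is regular for every j ≥ 3. Fix vertices u, v and an edge v x_0 ∈ E(H_1) with x_0 u ∉ E(H_1). If there exists any exchange for (v x_0, x_0 u) — i.e., a list of 2l distinct edges (v x_0, x_0 u, v x_1, x_1 u, …, v x_{l−1}, x_{l−1} u) such that x_i u and v x_{i+1} have the same color for all i modulo l — then there exists a simplified exchange L' for (v x_0, x_0 u) with X(L') ⊆ X(L), where an exchange is simplified if for each color class H_i at most one x_j ∈ X(L') has v x_j ∈ E(H_i), and X(L) denotes {x_0,…,x_{l−1}}. -/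

import Mathlib

open SimpleGraph

attribute [local instance] Classical.propDecidable

/-- The spanning subgraph of `K_n` consisting of the edges with color `j`
under the edge coloring `c`. -/
def Hc {n : ℕ} (c : Sym2 (Fin n) → ℕ) (j : ℕ) : SimpleGraph (Fin n) where
  Adj x y := x ≠ y ∧ c s(x, y) = j
  symm := by
    constructor
    rintro x y ⟨h1, h2⟩
    exact ⟨h1.symm, by rwa [Sym2.eq_swap]⟩
  loopless := by constructor; rintro x ⟨h, -⟩; exact h rfl

/-- An exchange for the edges `v x₀` and `x₀ u` (with `x₀ = x 0`): a cyclic list of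
`2l` distinct edges `(v x₀, x₀ u, v x₁, x₁ u, …, v x_{l-1}, x_{l-1} u)` such that
`x_i u` and `v x_{i+1}` have the same color for all `i` modulo `l`. -/
def IsExchange {n : ℕ} (c : Sym2 (Fin n) → ℕ) (v u : Fin n) (l : ℕ)
    (x : ℕ → Fin n) : Prop :=
  0 < l ∧ (∀ i, i < l → x i ≠ u ∧ x i ≠ v) ∧
    (∀ i j, i < l → j < l → x i = x j → i = j) ∧
    (∀ i, i < l → c s(x i, u) = c s(v, x ((i + 1) % l)))

/-- The set `X(L) = {x₀, …, x_{l-1}}` of an exchange (or near exchange). -/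
def ExchX {n : ℕ} (l : ℕ) (x : ℕ → Fin n) : Set (Fin n) := {y | ∃ i < l, x i = y}

/-- An exchange is simplified if for each color class at most one `x_j` has
`v x_j` of that color. -/
def Simplified {n : ℕ} (c : Sym2 (Fin n) → ℕ) (v : Fin n) (l : ℕ)
    (x : ℕ → Fin n) : Prop :=
  ∀ i j, i < l → j < l → c s(v, x i) = c s(v, x j) → i = j

lemma shorten {n : ℕ} (c : Sym2 (Fin n) → ℕ) (v u : Fin n) (l : ℕ) (x : ℕ → Fin n)
    (hL : IsExchange c v u l x) (hns : ¬ Simplified c v l x) :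
    ∃ l' < l, ∃ x' : ℕ → Fin n, IsExchange c v u l' x' ∧ x' 0 = x 0 ∧
      ExchX l' x' ⊆ ExchX l x := by
  obtain ⟨hl0, hne, hinj, hcols⟩ := hL
  simp only [Simplified, not_forall] at hns
  obtain ⟨i, j, hi, hj, hceq, hij⟩ := hns
  wlog hlt : i < j generalizing i j
  · exact this j i hj hi hceq.symm (Ne.symm hij) (by omega)
  rcases Nat.eq_zero_or_pos i with hi0 | hipos
  · -- case i = 0 : truncate to x_0 .. x_{j-1}
    subst hi0
    refine ⟨j, hj, x, ⟨hlt, fun k hk => hne k (hk.trans hj),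
      fun a b ha hb => hinj a b (ha.trans hj) (hb.trans hj), ?_⟩, rfl,
      fun y ⟨k, hk, hky⟩ => ⟨k, hk.trans hj, hky⟩⟩
    intro k hk
    by_cases hkj : k + 1 = j
    · have h1 : (k + 1) % j = 0 := by rw [hkj, Nat.mod_self]
      have h2 : (k + 1) % l = k + 1 := Nat.mod_eq_of_lt (by omega)
      have := hcols k (hk.trans hj)
      rw [h2, hkj] at this
      rw [h1, this, hceq.symm]
    · have h1 : (k + 1) % j = k + 1 := Nat.mod_eq_of_lt (by omega)
      have h2 : (k + 1) % l = k + 1 := Nat.mod_eq_of_lt (by omega)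
      have := hcols k (hk.trans hj)
      rw [h2] at this
      rw [h1, this]
  · -- case i ≥ 1 : delete x_i .. x_{j-1}
    set d := j - i with hd
    have hd1 : 1 ≤ d := by omega
    set L := l - d with hLdef
    have hLi : i + 1 ≤ L := by omega
    refine ⟨L, by omega, fun k => if k < i then x k else x (k + d), ?_, ?_, ?_⟩
    · refine ⟨by omega, ?_, ?_, ?_⟩
      · intro k hk
        dsimp only
        split_ifs with h
        · exact hne k (by omega)
        · exact hne (k + d) (by omega)
      · intro a b ha hb heq
        dsimp only at heq
        split_ifs at heq with h1 h2 h2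
        · exact hinj a b (by omega) (by omega) heq
        · have := hinj a (b + d) (by omega) (by omega) heq; omega
        · have := hinj (a + d) b (by omega) (by omega) heq; omega
        · have := hinj (a + d) (b + d) (by omega) (by omega) heq; omega
      · intro k hk
        dsimp only
        by_cases hA : k + 1 < i
        · have h1 : (k + 1) % L = k + 1 := Nat.mod_eq_of_lt (by omega)
          rw [h1, if_pos (by omega : k < i), if_pos hA]
          have := hcols k (by omega)
          rwa [Nat.mod_eq_of_lt (by omega)] at this
        · by_cases hB : k + 1 = i
          · have h1 : (k + 1) % L = k + 1 := Nat.mod_eq_of_lt (by omega)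
            rw [h1, if_pos (by omega : k < i), if_neg (by omega : ¬ k + 1 < i)]
            have := hcols k (by omega)
            rw [Nat.mod_eq_of_lt (by omega)] at this
            rw [this, hB]
            have : i + d = j := by omega
            rw [this, hceq]
          · -- k ≥ i
            have hki : ¬ k < i := by omega
            by_cases hC : k + 1 < L
            · have h1 : (k + 1) % L = k + 1 := Nat.mod_eq_of_lt hC
              rw [h1, if_neg hki, if_neg (by omega : ¬ k + 1 < i)]
              have := hcols (k + d) (by omega)
              rwa [Nat.mod_eq_of_lt (by omega), (by omega : k + d + 1 = k + 1 + d)] at this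
            · have hkL : k + 1 = L := by omega
              have h1 : (k + 1) % L = 0 := by rw [hkL, Nat.mod_self]
              rw [h1, if_neg hki, if_pos (by omega : (0:ℕ) < i)]
              have := hcols (k + d) (by omega)
              rwa [(by omega : k + d + 1 = l), Nat.mod_self] at this
    · dsimp only
      rw [if_pos (by omega : (0:ℕ) < i)]
    · rintro y ⟨k, hk, hky⟩
      dsimp only at hky
      split_ifs at hky with h
      · exact ⟨k, by omega, hky⟩
      · exact ⟨k + d, by omega, hky⟩

lemma aux_simplify {n : ℕ} (c : Sym2 (Fin n) → ℕ) (v u : Fin n) :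
    ∀ l, ∀ x : ℕ → Fin n, IsExchange c v u l x →
      ∃ l' x', IsExchange c v u l' x' ∧ x' 0 = x 0 ∧ Simplified c v l' x' ∧
        ExchX l' x' ⊆ ExchX l x := by
  intro l
  induction l using Nat.strong_induction_on with
  | _ l ih =>
    intro x hx
    by_cases hs : Simplified c v l x
    · exact ⟨l, x, hx, rfl, hs, subset_rfl⟩
    · obtain ⟨l', hl', x', hx', h0, hsub⟩ := shorten c v u l x hx hs
      obtain ⟨l'', x'', ha, hb, hc', hd⟩ := ih l' hl' x' hx'
      exact ⟨l'', x'', ha, hb.trans h0, hc', hd.trans hsub⟩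

theorem exists_simplified_exchange
    (n t : ℕ) (c : Sym2 (Fin n) → ℕ)
    (hcol : ∀ e : Sym2 (Fin n), ¬ e.IsDiag → 1 ≤ c e ∧ c e ≤ t)
    (hreg : ∀ j, 3 ≤ j → j ≤ t → ∃ r, (Hc c j).IsRegularOfDegree r)
    (u v x0 : Fin n)
    (h1 : (Hc c 1).Adj v x0)
    (h2 : ¬ (Hc c 1).Adj x0 u) (hx0u : x0 ≠ u)
    (l : ℕ) (x : ℕ → Fin n)
    (hL : IsExchange c v u l x) (hL0 : x 0 = x0) :
    ∃ (l' : ℕ) (x' : ℕ → Fin n), IsExchange c v u l' x' ∧ x' 0 = x0 ∧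
      Simplified c v l' x' ∧ ExchX l' x' ⊆ ExchX l x := by
  obtain ⟨l', x', ha, hb, hc', hd⟩ := aux_simplify c v u l x hL
  exact ⟨l', x', ha, hb.trans hL0, hc', hd⟩
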